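/- For integers 2 ≤ d_1 ≤ ... ≤ d_n with d_j - 1 dividing d_{j+1} - 1 for all j, and with m_j defined as the least positive integer m with m(d_j - 1) > Σ_{i=1}^{j-1}(d_i - 1) (and m_1 = 1), the minimum of the set { m_j(d_j - 1) + 1 + Σ_{i=j+1}^{n}(d_i - 1) : j = 1, ..., n } ∪ { 1 + Σ_{i=1}^{n}(d_i - 1) } equals m_n(d_n - 1) + 1. -/

import Mathlib

open Finset

theorem stmt_1 (n : ℕ) (d m : ℕ → ℕ) (hn : 1 ≤ n)
    (hd2 : ∀ j, 1 ≤ j → j ≤ n → 2 ≤ d j)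
    (hmono : ∀ j, 1 ≤ j → j < n → d j ≤ d (j + 1))
    (hdvd : ∀ j, 1 ≤ j → j < n → (d j - 1) ∣ (d (j + 1) - 1))
    (hm1 : m 1 = 1)
    (hm : ∀ j, 2 ≤ j → j ≤ n →
      IsLeast {k : ℕ | 0 < k ∧ (∑ i ∈ Icc 1 (j - 1), (d i - 1)) < k * (d j - 1)} (m j)) :
    (insert (1 + ∑ i ∈ Icc 1 n, (d i - 1))
        ((Icc 1 n).image (fun j => m j * (d j - 1) + 1 + ∑ i ∈ Icc (j + 1) n, (d i - 1)))).min'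
      (Finset.insert_nonempty _ _) = m n * (d n - 1) + 1 := by
  have he1 : ∀ j, 1 ≤ j → j ≤ n → 1 ≤ d j - 1 := fun j h1 h2 => by
    have := hd2 j h1 h2; omega
  have hSplit : ∀ j, 1 ≤ j →
      ∑ i ∈ Icc 1 j, (d i - 1) = (∑ i ∈ Icc 1 (j - 1), (d i - 1)) + (d j - 1) := by
    intro j h1
    have hj : j = (j - 1) + 1 := by omega
    rw [hj, Finset.sum_Icc_succ_top (by omega)]
    congr 1 <;> omega
  have hgt : ∀ j, 1 ≤ j → j ≤ n → (∑ i ∈ Icc 1 (j - 1), (d i - 1)) < m j * (d j - 1) := by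
    intro j h1 h2
    rcases eq_or_lt_of_le h1 with h | h
    · have h' : j = 1 := h.symm
      subst h'
      simp only [Nat.sub_self, hm1, one_mul]
      rw [show Icc 1 0 = (∅ : Finset ℕ) from Finset.Icc_eq_empty (by omega)]
      simp only [Finset.sum_empty]
      have := hd2 1 le_rfl h2
      omega
    · exact ((hm j (by omega) h2).1).2
  have hmpos : ∀ j, 1 ≤ j → j ≤ n → 1 ≤ m j := by
    intro j h1 h2
    rcases eq_or_lt_of_le h1 with h | h
    · rw [← h, hm1]
    · exact ((hm j (by omega) h2).1).1
  have hle : ∀ j, 2 ≤ j → j ≤ n →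
      (m j - 1) * (d j - 1) ≤ ∑ i ∈ Icc 1 (j - 1), (d i - 1) := by
    intro j h2 hjn
    by_contra hc
    push_neg at hc
    have hpos : 0 < m j - 1 := by
      rcases Nat.eq_zero_or_pos (m j - 1) with h0 | h0
      · rw [h0] at hc; omega
      · exact h0
    have h1 := (hm j h2 hjn).2 ⟨hpos, hc⟩
    have h2' := ((hm j h2 hjn).1).1
    omega
  have hstep : ∀ j, 1 ≤ j → j < n →
      m (j + 1) * (d (j + 1) - 1) ≤ m j * (d j - 1) + (d (j + 1) - 1) := by
    intro j h1 hjn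
    have hb : (m (j + 1) - 1) * (d (j + 1) - 1) ≤ ∑ i ∈ Icc 1 j, (d i - 1) := by
      have := hle (j + 1) (by omega) (by omega)
      simpa using this
    obtain ⟨k, hk⟩ := hdvd j h1 hjn
    by_contra hc
    push_neg at hc
    have hm1pos : 1 ≤ m (j + 1) := hmpos (j + 1) (by omega) (by omega)
    have heq : m (j + 1) * (d (j + 1) - 1)
        = (m (j + 1) - 1) * (d (j + 1) - 1) + (d (j + 1) - 1) := by
      have : m (j + 1) = (m (j + 1) - 1) + 1 := by omega
      rw [this, add_mul, one_mul]
      congr 1 <;> omega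
    have hba : m j * (d j - 1) < (m (j + 1) - 1) * (d (j + 1) - 1) := by omega
    rw [hk] at hba
    have hej : 1 ≤ d j - 1 := he1 j h1 (by omega)
    have hk' : m j < (m (j + 1) - 1) * k := by
      rw [mul_comm (d j - 1) k, ← mul_assoc] at hba
      exact Nat.lt_of_mul_lt_mul_right hba
    have hbig : (m j + 1) * (d j - 1) ≤ (m (j + 1) - 1) * ((d j - 1) * k) := by
      rw [mul_comm (d j - 1) k, ← mul_assoc]
      exact Nat.mul_le_mul_right _ (by omega)
    have hg := hgt j h1 (by omega)
    have hS := hSplit j h1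
    rw [← hk] at hbig
    have : (∑ i ∈ Icc 1 j, (d i - 1)) < (m (j + 1) - 1) * (d (j + 1) - 1) := by
      have : (∑ i ∈ Icc 1 (j - 1), (d i - 1)) + (d j - 1) < (m j + 1) * (d j - 1) := by
        rw [add_mul, one_mul]; omega
      omega
    omega
  have hmain : ∀ t j, 1 ≤ j → j + t = n →
      m n * (d n - 1) ≤ m j * (d j - 1) + ∑ i ∈ Icc (j + 1) n, (d i - 1) := by
    intro t
    induction t with
    | zero =>
      intro j h1 hjn
      have hj : j = n := by omega
      subst hj
      rw [show Icc (j + 1) j = (∅ : Finset ℕ) from Finset.Icc_eq_empty (by omega)]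
      simp
    | succ t ih =>
      intro j h1 hjn
      have h1' := hstep j h1 (by omega)
      have h2' := ih (j + 1) (by omega) (by omega)
      have hsum : ∑ i ∈ Icc (j + 1) n, (d i - 1)
          = (d (j + 1) - 1) + ∑ i ∈ Icc (j + 1 + 1) n, (d i - 1) := by
        rw [← Finset.insert_Icc_add_one_left_eq_Icc (by omega : j + 1 ≤ n),
          Finset.sum_insert (by simp)]
      omega
  apply le_antisymm
  · apply Finset.min'_le
    apply Finset.mem_insert_of_mem
    apply Finset.mem_image.mpr
    refine ⟨n, by simp [hn], ?_⟩
    rw [show Icc (n + 1) n = (∅ : Finset ℕ) from Finset.Icc_eq_empty (by omega)]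
    simp
  · apply Finset.le_min'
    intro y hy
    rcases Finset.mem_insert.mp hy with h | h
    · subst h
      have : m n * (d n - 1) ≤ ∑ i ∈ Icc 1 n, (d i - 1) := by
        rcases eq_or_lt_of_le hn with h1 | h1
        · rw [← h1, hm1, one_mul, hSplit 1 le_rfl]
          omega
        · have h2 := hle n (by omega) le_rfl
          have hm' := hmpos n hn le_rfl
          have hS := hSplit n hn
          have : m n * (d n - 1) = (m n - 1) * (d n - 1) + (d n - 1) := by
            have : m n = (m n - 1) + 1 := by omega
            rw [this, add_mul, one_mul]
            congr 1 <;> omega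
          omega
      omega
    · obtain ⟨j, hj, rfl⟩ := Finset.mem_image.mp h
      simp only [Finset.mem_Icc] at hj
      have := hmain (n - j) j hj.1 (by omega)
      omega
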